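/- arXiv:2305.05666 — 6 statements merged into one kernel-verified Lean document; each statement's English description precedes it below -/
import Mathlib

section
/- Let M and M̄ be finite MDPs and h = (f, g_s) an MDP homomorphism from M to M̄ (f: S → S̄ and g_s: A → Ā surjective, with reward invariance R(s,a) = R̄(f(s), g_s(a)) and transition equivariance τ̄_{g_s(a)}(f(s') | f(s)) = Σ_{s'' ∈ [s']} τ_a(s'' | s)). Then for every state-action pair (s,a), the optimal action-value functions satisfy Q*(s,a) = Q̄*(f(s), g_s(a)). -/
open Finset


lemma sup'_comp_surj {A B : Type*} [Fintype A] [Fintype B] [Nonempty A] [Nonempty B]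
    (g : A → B) (hg : Function.Surjective g) (h : B → ℝ) :
    univ.sup' univ_nonempty (fun a => h (g a)) = univ.sup' univ_nonempty h := by
  apply le_antisymm
  · exact Finset.sup'_le _ _ fun a _ => Finset.le_sup' h (mem_univ (g a))
  · apply Finset.sup'_le
    intro b _
    obtain ⟨a, rfl⟩ := hg b
    exact Finset.le_sup' (fun a => h (g a)) (mem_univ a)

lemma abs_sup'_sub_sup'_le {A : Type*} [Fintype A] [Nonempty A]
    (F G : A → ℝ) (D : ℝ) (hD : ∀ a, |F a - G a| ≤ D) :
    |univ.sup' univ_nonempty F - univ.sup' univ_nonempty G| ≤ D := by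
  rw [abs_sub_le_iff]
  refine ⟨?_, ?_⟩ <;> rw [sub_le_iff_le_add] <;> apply Finset.sup'_le <;> intro a _
  · have h1 := (abs_le.mp (hD a)).2
    have h2 : G a ≤ univ.sup' univ_nonempty G := Finset.le_sup' G (mem_univ a)
    linarith
  · have h1 := (abs_le.mp (hD a)).1
    have h2 : F a ≤ univ.sup' univ_nonempty F := Finset.le_sup' F (mem_univ a)
    linarith

/-- Optimal value equivalence for finite MDP homomorphisms:
`Q*(s,a) = Q̄*(f(s), g_s(a))`. -/
theorem stmt_0
    {S A Sb Ab : Type*} [Fintype S] [Fintype A] [Fintype Sb] [Fintype Ab] [DecidableEq Sb]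
    [Nonempty A] [Nonempty Ab]
    (τ : A → S → S → ℝ) (R : S → A → ℝ) (γ : ℝ) (hγ0 : 0 < γ) (hγ1 : γ < 1)
    (hτpos : ∀ a s s', 0 ≤ τ a s s') (hτsum : ∀ a s, ∑ s', τ a s s' = 1)
    (τb : Ab → Sb → Sb → ℝ) (Rb : Sb → Ab → ℝ)
    (hτbpos : ∀ ab sb sb', 0 ≤ τb ab sb sb') (hτbsum : ∀ ab sb, ∑ sb', τb ab sb sb' = 1)
    (f : S → Sb) (g : S → A → Ab)
    (hf : Function.Surjective f) (hg : ∀ s, Function.Surjective (g s))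
    -- reward invariance
    (hR : ∀ s a, R s a = Rb (f s) (g s a))
    -- transition equivariance
    (hτeq : ∀ s a s', τb (g s a) (f s) (f s')
        = ∑ s'' ∈ univ.filter (fun s'' => f s'' = f s'), τ a s s'')
    -- Q* is the (unique) fixed point of the Bellman optimality operator on M
    (Q : S → A → ℝ)
    (hQ : ∀ s a, Q s a
        = R s a + γ * ∑ s', τ a s s' * univ.sup' univ_nonempty (fun a' => Q s' a'))
    -- Q̄* is the (unique) fixed point of the Bellman optimality operator on M̄
    (Qb : Sb → Ab → ℝ)
    (hQb : ∀ sb ab, Qb sb ab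
        = Rb sb ab + γ * ∑ sb', τb ab sb sb' * univ.sup' univ_nonempty (fun ab' => Qb sb' ab')) :
    ∀ s a, Q s a = Qb (f s) (g s a) := by
  intro s₀ a₀
  have hS : Nonempty S := ⟨s₀⟩
  set Q' : S → A → ℝ := fun s a => Qb (f s) (g s a) with hQ'def
  -- Q' satisfies the Bellman equation on M
  have hQ' : ∀ s a, Q' s a
      = R s a + γ * ∑ s', τ a s s' * univ.sup' univ_nonempty (fun a' => Q' s' a') := by
    intro s a
    have hsup : ∀ s' : S, univ.sup' univ_nonempty (fun a' => Q' s' a')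
        = univ.sup' univ_nonempty (fun ab' => Qb (f s') ab') := by
      intro s'
      exact sup'_comp_surj (g s') (hg s') (fun ab' => Qb (f s') ab')
    have key : ∑ sb', τb (g s a) (f s) sb' * univ.sup' univ_nonempty (fun ab' => Qb sb' ab')
        = ∑ s', τ a s s' * univ.sup' univ_nonempty (fun a' => Q' s' a') := by
      have := Finset.sum_fiberwise_eq_sum_filter (univ : Finset S) (univ : Finset Sb) f
        (fun s' => τ a s s' * univ.sup' univ_nonempty (fun a' => Q' s' a'))
      simp only [Finset.mem_univ, Finset.filter_true] at this
      rw [← this]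
      apply Finset.sum_congr rfl
      intro sb' _
      obtain ⟨s₁, rfl⟩ := hf sb'
      rw [hτeq s a s₁]
      rw [Finset.sum_mul]
      apply Finset.sum_congr rfl
      intro s'' hs''
      have hfs : f s'' = f s₁ := by simpa using hs''
      rw [hsup s'', hfs]
    rw [hQ'def]
    simp only
    rw [hQb (f s) (g s a), ← hR, key]
  -- uniqueness via contraction
  set D : ℝ := univ.sup' univ_nonempty (fun p : S × A => |Q p.1 p.2 - Q' p.1 p.2|) with hD
  have hDle : ∀ s a, |Q s a - Q' s a| ≤ D := fun s a =>
    Finset.le_sup' (fun p : S × A => |Q p.1 p.2 - Q' p.1 p.2|) (mem_univ (s, a))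
  have hD0 : 0 ≤ D := le_trans (abs_nonneg _) (hDle s₀ a₀)
  have hcontr : D ≤ γ * D := by
    apply Finset.sup'_le
    rintro ⟨s, a⟩ _
    simp only
    rw [hQ s a, hQ' s a]
    have : R s a + γ * ∑ s', τ a s s' * univ.sup' univ_nonempty (fun a' => Q s' a')
        - (R s a + γ * ∑ s', τ a s s' * univ.sup' univ_nonempty (fun a' => Q' s' a'))
        = γ * ∑ s', τ a s s' * (univ.sup' univ_nonempty (fun a' => Q s' a')
            - univ.sup' univ_nonempty (fun a' => Q' s' a')) := by
      rw [add_sub_add_left_eq_sub, ← mul_sub, ← Finset.sum_sub_distrib]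
      congr 1
      apply Finset.sum_congr rfl
      intro s' _
      ring
    rw [this, abs_mul, abs_of_pos hγ0]
    apply mul_le_mul_of_nonneg_left _ hγ0.le
    calc |∑ s', τ a s s' * (univ.sup' univ_nonempty (fun a' => Q s' a')
            - univ.sup' univ_nonempty (fun a' => Q' s' a'))|
        ≤ ∑ s', |τ a s s' * (univ.sup' univ_nonempty (fun a' => Q s' a')
            - univ.sup' univ_nonempty (fun a' => Q' s' a'))| := Finset.abs_sum_le_sum_abs _ _
      _ ≤ ∑ s', τ a s s' * D := by
          apply Finset.sum_le_sum
          intro s' _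
          rw [abs_mul, abs_of_nonneg (hτpos a s s')]
          apply mul_le_mul_of_nonneg_left _ (hτpos a s s')
          exact abs_sup'_sub_sup'_le _ _ D (fun a' => hDle s' a')
      _ = D := by rw [← Finset.sum_mul, hτsum a s, one_mul]
  have hDzero : D ≤ 0 := by nlinarith
  have := hDle s₀ a₀
  have : |Q s₀ a₀ - Q' s₀ a₀| ≤ 0 := le_trans this hDzero
  have := abs_nonneg (Q s₀ a₀ - Q' s₀ a₀)
  have h0 : Q s₀ a₀ - Q' s₀ a₀ = 0 := by
    have : |Q s₀ a₀ - Q' s₀ a₀| = 0 := le_antisymm ‹|Q s₀ a₀ - Q' s₀ a₀| ≤ 0› this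
    exact abs_eq_zero.mp this
  linarith [h0]
end

section
/- Let h = (f, g_s) be a finite MDP homomorphism from M to M̄, π̄ a policy on M̄, and π↑ any lifted policy satisfying Σ_{a' ∈ g_s^{-1}({g_s(a)})} π↑(a'|s) = π̄(g_s(a)|f(s)) for all s, a. Then for all (s,a): Q^{π↑}(s,a) = Q̄^{π̄}(f(s), g_s(a)). -/
open Finset

/-- Value equivalence for finite MDP homomorphisms: for any abstract policy `π̄` and any
lifted policy `π↑` (one whose fiber sums match `π̄`), `Q^{π↑}(s,a) = Q̄^{π̄}(f(s), g_s(a))`. -/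
theorem stmt_2
    {S A Sb Ab : Type*} [Fintype S] [Fintype A] [Fintype Sb] [Fintype Ab]
    [DecidableEq Sb] [DecidableEq Ab]
    (τ : A → S → S → ℝ) (R : S → A → ℝ) (γ : ℝ) (hγ0 : 0 < γ) (hγ1 : γ < 1)
    (hτpos : ∀ a s s', 0 ≤ τ a s s') (hτsum : ∀ a s, ∑ s', τ a s s' = 1)
    (τb : Ab → Sb → Sb → ℝ) (Rb : Sb → Ab → ℝ)
    (hτbpos : ∀ ab sb sb', 0 ≤ τb ab sb sb') (hτbsum : ∀ ab sb, ∑ sb', τb ab sb sb' = 1)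
    (f : S → Sb) (g : S → A → Ab)
    (hf : Function.Surjective f) (hg : ∀ s, Function.Surjective (g s))
    -- reward invariance
    (hR : ∀ s a, R s a = Rb (f s) (g s a))
    -- transition equivariance
    (hτeq : ∀ s a s', τb (g s a) (f s) (f s')
        = ∑ s'' ∈ univ.filter (fun s'' => f s'' = f s'), τ a s s'')
    -- π̄ is a policy on M̄ and π↑ a policy on M
    (πb : Sb → Ab → ℝ)
    (hπbpos : ∀ sb ab, 0 ≤ πb sb ab) (hπbsum : ∀ sb, ∑ ab, πb sb ab = 1)
    (πlift : S → A → ℝ)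
    (hπpos : ∀ s a, 0 ≤ πlift s a) (hπsum : ∀ s, ∑ a, πlift s a = 1)
    -- π↑ is a lifted policy of π̄
    (hlift : ∀ s a, ∑ a' ∈ univ.filter (fun a' => g s a' = g s a), πlift s a'
        = πb (f s) (g s a))
    -- Q^{π↑} is the (unique) fixed point of the Bellman operator for π↑ on M
    (Q : S → A → ℝ)
    (hQ : ∀ s a, Q s a
        = R s a + γ * ∑ s', τ a s s' * ∑ a', πlift s' a' * Q s' a')
    -- Q̄^{π̄} is the (unique) fixed point of the Bellman operator for π̄ on M̄
    (Qb : Sb → Ab → ℝ)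
    (hQb : ∀ sb ab, Qb sb ab
        = Rb sb ab + γ * ∑ sb', τb ab sb sb' * ∑ ab', πb sb' ab' * Qb sb' ab') :
    ∀ s a, Q s a = Qb (f s) (g s a) := by
  intro s₀ a₀
  -- key: Qb ∘ (f,g) also satisfies the Bellman equation of (πlift, τ, R)
  have key : ∀ s a, Qb (f s) (g s a)
      = R s a + γ * ∑ s', τ a s s' * ∑ a', πlift s' a' * Qb (f s') (g s' a') := by
    intro s a
    rw [hQb, ← hR]
    congr 1
    congr 1
    -- inner sums: for each s', ∑ a', πlift s' a' * Qb (f s') (g s' a') = V (f s')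
    have inner : ∀ s' : S, ∑ a', πlift s' a' * Qb (f s') (g s' a')
        = ∑ ab', πb (f s') ab' * Qb (f s') ab' := by
      intro s'
      rw [← Finset.sum_fiberwise (univ : Finset A) (g s')
        (fun a' => πlift s' a' * Qb (f s') (g s' a'))]
      refine Finset.sum_congr rfl fun ab' _ => ?_
      obtain ⟨a', rfl⟩ := hg s' ab'
      rw [Finset.sum_congr rfl (fun x hx => ?_), ← Finset.sum_mul, hlift]
      simp only [Finset.mem_filter] at hx
      rw [hx.2]
    -- outer sums: fiberwise over f
    rw [← Finset.sum_fiberwise (univ : Finset S) f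
      (fun s' => τ a s s' * ∑ a', πlift s' a' * Qb (f s') (g s' a'))]
    refine Finset.sum_congr rfl fun sb' _ => ?_
    obtain ⟨s', rfl⟩ := hf sb'
    rw [hτeq, Finset.sum_mul]
    refine Finset.sum_congr rfl fun x hx => ?_
    simp only [Finset.mem_filter] at hx
    rw [inner x, hx.2]
  -- contraction argument
  set D : S × A → ℝ := fun p => |Q p.1 p.2 - Qb (f p.1) (g p.1 p.2)| with hD
  have hne : (univ : Finset (S × A)).Nonempty := ⟨(s₀, a₀), mem_univ _⟩
  set m : ℝ := (univ : Finset (S × A)).sup' hne D with hm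
  have hDle : ∀ p : S × A, D p ≤ m := fun p => Finset.le_sup' D (mem_univ p)
  have hm0 : 0 ≤ m := le_trans (abs_nonneg _) (hDle (s₀, a₀))
  have hbound : ∀ p : S × A, D p ≤ γ * m := by
    rintro ⟨s, a⟩
    have h1 : Q s a - Qb (f s) (g s a)
        = γ * ∑ s', τ a s s' *
          ∑ a', πlift s' a' * (Q s' a' - Qb (f s') (g s' a')) := by
      rw [hQ, key]
      have e1 : ∀ s' : S, ∑ a', πlift s' a' * (Q s' a' - Qb (f s') (g s' a'))
          = (∑ a', πlift s' a' * Q s' a')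
            - ∑ a', πlift s' a' * Qb (f s') (g s' a') := by
        intro s'
        rw [← Finset.sum_sub_distrib]
        exact Finset.sum_congr rfl fun a' _ => by ring
      simp_rw [e1, mul_sub, Finset.sum_sub_distrib]
      ring
    have h2 : D (s, a) ≤ γ * ∑ s', τ a s s' *
        ∑ a', πlift s' a' * D (s', a') := by
      rw [hD]
      simp only
      rw [h1, abs_mul, abs_of_pos hγ0]
      refine mul_le_mul_of_nonneg_left ?_ (le_of_lt hγ0)
      refine le_trans (Finset.abs_sum_le_sum_abs _ _) ?_
      refine Finset.sum_le_sum fun s' _ => ?_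
      rw [abs_mul, abs_of_nonneg (hτpos a s s')]
      refine mul_le_mul_of_nonneg_left ?_ (hτpos a s s')
      refine le_trans (Finset.abs_sum_le_sum_abs _ _) ?_
      refine Finset.sum_le_sum fun a' _ => ?_
      rw [abs_mul, abs_of_nonneg (hπpos s' a')]
    refine le_trans h2 ?_
    refine mul_le_mul_of_nonneg_left ?_ (le_of_lt hγ0)
    calc ∑ s', τ a s s' * ∑ a', πlift s' a' * D (s', a')
        ≤ ∑ s', τ a s s' * m := by
          refine Finset.sum_le_sum fun s' _ => ?_
          refine mul_le_mul_of_nonneg_left ?_ (hτpos a s s')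
          calc ∑ a', πlift s' a' * D (s', a')
              ≤ ∑ a', πlift s' a' * m :=
                Finset.sum_le_sum fun a' _ =>
                  mul_le_mul_of_nonneg_left (hDle _) (hπpos s' a')
            _ = m := by rw [← Finset.sum_mul, hπsum, one_mul]
      _ = m := by rw [← Finset.sum_mul, hτsum, one_mul]
  have hmle : m ≤ γ * m := by
    obtain ⟨p, _, hp⟩ := Finset.exists_mem_eq_sup' hne D
    have hmp : m = D p := hp
    have := hbound p
    linarith
  have hmz : m = 0 := by nlinarith
  have : D (s₀, a₀) = 0 := le_antisymm (hmz ▸ hDle (s₀, a₀)) (abs_nonneg _)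
  have := abs_eq_zero.mp this
  linarith
end

section
/- Let h = (f, g_s) be a finite MDP homomorphism from M to M̄, and let π̄* be an optimal policy on M̄. Then the lifted policy π↑ of π̄* is an optimal policy for M, i.e., V^{π↑}(s) = V*(s) for all s ∈ S. -/
open Finset

private lemma avg_bound {ι : Type*} [Fintype ι] (c x : ι → ℝ)
    (hc : ∀ i, 0 ≤ c i) (hsum : ∑ i, c i = 1) (B : ℝ) (hx : ∀ i, |x i| ≤ B) :
    |∑ i, c i * x i| ≤ B := by
  calc |∑ i, c i * x i| ≤ ∑ i, |c i * x i| := Finset.abs_sum_le_sum_abs _ _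
    _ ≤ ∑ i, c i * B := by
        refine Finset.sum_le_sum fun i _ => ?_
        rw [abs_mul, abs_of_nonneg (hc i)]
        exact mul_le_mul_of_nonneg_left (hx i) (hc i)
    _ = B := by rw [← Finset.sum_mul, hsum, one_mul]

private lemma sup_diff_bound {ι : Type*} {s : Finset ι} (hs : s.Nonempty)
    (F G : ι → ℝ) (B : ℝ) (h : ∀ i ∈ s, |F i - G i| ≤ B) :
    |s.sup' hs F - s.sup' hs G| ≤ B := by
  rw [abs_sub_le_iff]
  constructor
  · rw [sub_le_iff_le_add]
    refine Finset.sup'_le _ _ fun i hi => ?_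
    have := abs_le.mp (h i hi)
    have := Finset.le_sup' G hi
    linarith
  · rw [sub_le_iff_le_add]
    refine Finset.sup'_le _ _ fun i hi => ?_
    have := abs_le.mp (h i hi)
    have := Finset.le_sup' F hi
    linarith

private lemma contraction_zero {S : Type*} [Fintype S] (hne : (univ : Finset S).Nonempty)
    (γ : ℝ) (hγ1 : γ < 1) (d : S → ℝ) (hd0 : ∀ s, 0 ≤ d s)
    (hbd : ∀ s, d s ≤ γ * univ.sup' hne d) : ∀ s, d s = 0 := by
  set D := univ.sup' hne d with hD
  have hDle : D ≤ γ * D := Finset.sup'_le _ _ fun s _ => hbd s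
  obtain ⟨s0, hs0⟩ := hne
  have hD0 : 0 ≤ D := le_trans (hd0 s0) (Finset.le_sup' d hs0)
  have hDzero : D = 0 := by nlinarith
  intro s
  have h1 := hbd s
  rw [hDzero, mul_zero] at h1
  linarith [hd0 s]


open Finset

/-- Optimality of the lifted policy: if `π̄*` is optimal on the image MDP `M̄`, then its
lift `π↑(a|s) = π̄*(g_s(a)|f(s)) / |g_s⁻¹({g_s(a)})|` is optimal for `M`,
i.e. `V^{π↑}(s) = V*(s)` for all `s`. -/
theorem stmt_3
    {S A Sb Ab : Type*} [Fintype S] [Fintype A] [Fintype Sb] [Fintype Ab]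
    [DecidableEq Sb] [DecidableEq Ab] [Nonempty A] [Nonempty Ab]
    (τ : A → S → S → ℝ) (R : S → A → ℝ) (γ : ℝ) (hγ0 : 0 < γ) (hγ1 : γ < 1)
    (hτpos : ∀ a s s', 0 ≤ τ a s s') (hτsum : ∀ a s, ∑ s', τ a s s' = 1)
    (τb : Ab → Sb → Sb → ℝ) (Rb : Sb → Ab → ℝ)
    (hτbpos : ∀ ab sb sb', 0 ≤ τb ab sb sb') (hτbsum : ∀ ab sb, ∑ sb', τb ab sb sb' = 1)
    (f : S → Sb) (g : S → A → Ab)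
    (hf : Function.Surjective f) (hg : ∀ s, Function.Surjective (g s))
    -- reward invariance
    (hR : ∀ s a, R s a = Rb (f s) (g s a))
    -- transition equivariance
    (hτeq : ∀ s a s', τb (g s a) (f s) (f s')
        = ∑ s'' ∈ univ.filter (fun s'' => f s'' = f s'), τ a s s'')
    -- π̄* is a policy on M̄
    (πb : Sb → Ab → ℝ)
    (hπbpos : ∀ sb ab, 0 ≤ πb sb ab) (hπbsum : ∀ sb, ∑ ab, πb sb ab = 1)
    -- V̄^{π̄*}: value function of π̄* on M̄
    (Vbπ : Sb → ℝ)
    (hVbπ : ∀ sb, Vbπ sb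
        = ∑ ab, πb sb ab * (Rb sb ab + γ * ∑ sb', τb ab sb sb' * Vbπ sb'))
    -- V̄*: optimal value function of M̄
    (Vbstar : Sb → ℝ)
    (hVbstar : ∀ sb, Vbstar sb
        = univ.sup' univ_nonempty
            (fun ab => Rb sb ab + γ * ∑ sb', τb ab sb sb' * Vbstar sb'))
    -- π̄* is optimal on M̄
    (hopt : ∀ sb, Vbπ sb = Vbstar sb)
    -- the lifted policy of π̄*
    (πlift : S → A → ℝ)
    (hlift : ∀ s a, πlift s a
        = πb (f s) (g s a) / (univ.filter (fun a' => g s a' = g s a)).card)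
    -- V^{π↑}: value function of the lifted policy on M
    (Vπ : S → ℝ)
    (hVπ : ∀ s, Vπ s
        = ∑ a, πlift s a * (R s a + γ * ∑ s', τ a s s' * Vπ s'))
    -- V*: optimal value function of M
    (Vstar : S → ℝ)
    (hVstar : ∀ s, Vstar s
        = univ.sup' univ_nonempty
            (fun a => R s a + γ * ∑ s', τ a s s' * Vstar s')) :
    ∀ s, Vπ s = Vstar s := by
  -- transfer: pushing sums over S to sums over Sb
  have transfer : ∀ (φ : Sb → ℝ) (s : S) (a : A),
      ∑ s', τ a s s' * φ (f s') = ∑ sb', τb (g s a) (f s) sb' * φ sb' := by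
    intro φ s a
    rw [← Finset.sum_fiberwise_of_maps_to (g := f) (t := (univ : Finset Sb))
      (fun x _ => mem_univ _) (fun s' => τ a s s' * φ (f s'))]
    refine Finset.sum_congr rfl fun sb' _ => ?_
    obtain ⟨s', rfl⟩ := hf sb'
    rw [hτeq s a s', Finset.sum_mul]
    refine Finset.sum_congr rfl fun s'' hs'' => ?_
    rw [(Finset.mem_filter.mp hs'').2]
  -- grouping sums over A by the fibers of g s
  have group : ∀ (s : S) (H : Ab → ℝ),
      ∑ a, πlift s a * H (g s a) = ∑ ab, πb (f s) ab * H ab := by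
    intro s H
    rw [← Finset.sum_fiberwise_of_maps_to (g := g s) (t := (univ : Finset Ab))
      (fun x _ => mem_univ _) (fun a => πlift s a * H (g s a))]
    refine Finset.sum_congr rfl fun ab _ => ?_
    obtain ⟨a0, ha0⟩ := hg s ab
    have hcardpos : 0 < (univ.filter fun a' => g s a' = ab).card :=
      card_pos.mpr ⟨a0, mem_filter.mpr ⟨mem_univ _, ha0⟩⟩
    have hcard : ((univ.filter fun a' => g s a' = ab).card : ℝ) ≠ 0 :=
      Nat.cast_ne_zero.mpr hcardpos.ne'
    calc ∑ a ∈ univ.filter (fun a => g s a = ab), πlift s a * H (g s a)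
        = ∑ _a ∈ univ.filter (fun a => g s a = ab),
            πb (f s) ab / (univ.filter fun a' => g s a' = ab).card * H ab := by
          refine Finset.sum_congr rfl fun a ha => ?_
          have hga := (mem_filter.mp ha).2
          rw [hlift, hga]
      _ = ((univ.filter fun a' => g s a' = ab).card : ℝ) *
            (πb (f s) ab / (univ.filter fun a' => g s a' = ab).card * H ab) := by
          rw [Finset.sum_const, nsmul_eq_mul]
      _ = πb (f s) ab * H ab := by field_simp
  have hliftpos : ∀ s a, 0 ≤ πlift s a := by
    intro s a
    rw [hlift]
    exact div_nonneg (hπbpos _ _) (Nat.cast_nonneg _)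
  have hliftsum : ∀ s, ∑ a, πlift s a = 1 := by
    intro s
    have := group s (fun _ => 1)
    simpa [hπbsum] using this
  -- Vbπ ∘ f satisfies the Bellman equation of πlift on M
  have claim1 : ∀ s, Vbπ (f s)
      = ∑ a, πlift s a * (R s a + γ * ∑ s', τ a s s' * Vbπ (f s')) := by
    intro s
    rw [hVbπ (f s),
      ← group s (fun ab => Rb (f s) ab + γ * ∑ sb', τb ab (f s) sb' * Vbπ sb')]
    refine Finset.sum_congr rfl fun a _ => ?_
    rw [hR, transfer Vbπ s a]
  -- Vbstar ∘ f satisfies the Bellman optimality equation on M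
  have claim2 : ∀ s, Vbstar (f s)
      = univ.sup' univ_nonempty (fun a => R s a + γ * ∑ s', τ a s s' * Vbstar (f s')) := by
    intro s
    rw [hVbstar (f s)]
    apply le_antisymm
    · refine Finset.sup'_le _ _ fun ab _ => ?_
      obtain ⟨a, ha⟩ := hg s ab
      refine le_trans (le_of_eq ?_) (Finset.le_sup' _ (mem_univ a))
      rw [hR, transfer Vbstar s a, ha]
    · refine Finset.sup'_le _ _ fun a _ => ?_
      refine le_trans (le_of_eq ?_) (Finset.le_sup' _ (mem_univ (g s a)))
      rw [hR, transfer Vbstar s a]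
  intro s0
  have hS : Nonempty S := ⟨s0⟩
  have hne : (univ : Finset S).Nonempty := univ_nonempty
  -- Step 1: Vπ = Vbπ ∘ f via contraction
  have hstep1 : ∀ s, Vπ s = Vbπ (f s) := by
    have := contraction_zero hne γ hγ1 (fun s => |Vπ s - Vbπ (f s)|)
      (fun s => abs_nonneg _) ?_
    · intro s
      have h := this s
      have := abs_eq_zero.mp h
      linarith
    · intro s
      set D := univ.sup' hne (fun s => |Vπ s - Vbπ (f s)|) with hD
      show |Vπ s - Vbπ (f s)| ≤ γ * D
      have hD0 : 0 ≤ D := le_trans (abs_nonneg (Vπ s - Vbπ (f s)))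
        (Finset.le_sup' (fun s => |Vπ s - Vbπ (f s)|) (mem_univ s))
      have key : Vπ s - Vbπ (f s)
          = ∑ a, πlift s a * (γ * ∑ s', τ a s s' * (Vπ s' - Vbπ (f s'))) := by
        rw [hVπ s, claim1 s, ← Finset.sum_sub_distrib]
        refine Finset.sum_congr rfl fun a _ => ?_
        have hsub : ∑ s', τ a s s' * (Vπ s' - Vbπ (f s'))
            = (∑ s', τ a s s' * Vπ s') - ∑ s', τ a s s' * Vbπ (f s') := by
          rw [← Finset.sum_sub_distrib]
          exact Finset.sum_congr rfl fun _ _ => mul_sub _ _ _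
        rw [hsub]; ring
      rw [key]
      refine avg_bound _ _ (hliftpos s) (hliftsum s) _ fun a => ?_
      rw [abs_mul, abs_of_nonneg hγ0.le]
      refine mul_le_mul_of_nonneg_left ?_ hγ0.le
      exact avg_bound _ _ (hτpos a s) (hτsum a s) D
        (fun s' => Finset.le_sup' (fun s => |Vπ s - Vbπ (f s)|) (mem_univ s'))
  -- Step 2: Vstar = Vbstar ∘ f via contraction
  have hstep2 : ∀ s, Vstar s = Vbstar (f s) := by
    have := contraction_zero hne γ hγ1 (fun s => |Vstar s - Vbstar (f s)|)
      (fun s => abs_nonneg _) ?_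
    · intro s
      have h := this s
      have := abs_eq_zero.mp h
      linarith
    · intro s
      set D := univ.sup' hne (fun s => |Vstar s - Vbstar (f s)|) with hD
      show |Vstar s - Vbstar (f s)| ≤ γ * D
      rw [hVstar s, claim2 s]
      refine sup_diff_bound _ _ _ _ fun a _ => ?_
      have hsub : ∑ s', τ a s s' * (Vstar s' - Vbstar (f s'))
          = (∑ s', τ a s s' * Vstar s') - ∑ s', τ a s s' * Vbstar (f s') := by
        rw [← Finset.sum_sub_distrib]
        exact Finset.sum_congr rfl fun _ _ => mul_sub _ _ _
      have heq : (R s a + γ * ∑ s', τ a s s' * Vstar s')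
          - (R s a + γ * ∑ s', τ a s s' * Vbstar (f s'))
          = γ * ∑ s', τ a s s' * (Vstar s' - Vbstar (f s')) := by
        rw [hsub]; ring
      rw [heq, abs_mul, abs_of_nonneg hγ0.le]
      refine mul_le_mul_of_nonneg_left ?_ hγ0.le
      exact avg_bound _ _ (hτpos a s) (hτsum a s) D
        (fun s' => Finset.le_sup' (fun s => |Vstar s - Vbstar (f s)|) (mem_univ s'))
  rw [hstep1 s0, hstep2 s0, hopt]
end

section
/- Let h = (f, g_s) be a continuous MDP homomorphism from M to M̄ with bounded measurable rewards and γ ∈ (0,1). Define Q₀(s,a) = R(s,a) and Q_{m+1}(s,a) = R(s,a) + γ ∫_S sup_{a'} Q_m(s', a') τ_a(ds'|s), and analogously Q̄_m on M̄. Then for all m ≥ 0 and all (s,a): Q_m(s,a) = Q̄_m(f(s), g_s(a)). -/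
open MeasureTheory

/-- Value-iteration equivalence for continuous MDP homomorphisms: the value-iteration
sequences `Q_m` on `M` and `Q̄_m` on `M̄` satisfy `Q_m(s,a) = Q̄_m(f(s), g_s(a))`. -/
theorem stmt_11
    {S A Sb Ab : Type*}
    [MeasurableSpace S] [MeasurableSpace A] [MeasurableSpace Sb] [MeasurableSpace Ab]
    -- the actual MDP M
    (τ : A → S → Measure S) (hτ : ∀ a s, IsProbabilityMeasure (τ a s))
    (R : S → A → ℝ) (hRmeas : Measurable fun p : S × A => R p.1 p.2)
    (hRbdd : ∃ C, ∀ s a, |R s a| ≤ C)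
    -- the abstract MDP M̄
    (τb : Ab → Sb → Measure Sb) (hτb : ∀ ab sb, IsProbabilityMeasure (τb ab sb))
    (Rb : Sb → Ab → ℝ) (hRbmeas : Measurable fun p : Sb × Ab => Rb p.1 p.2)
    (γ : ℝ) (hγ0 : 0 < γ) (hγ1 : γ < 1)
    -- the continuous MDP homomorphism h = (f, g_s)
    (f : S → Sb) (hfmeas : Measurable f) (hfsurj : Function.Surjective f)
    (g : S → A → Ab) (hgmeas : ∀ s, Measurable (g s))
    (hgsurj : ∀ s, Function.Surjective (g s))
    -- reward invariance
    (hR : ∀ s a, R s a = Rb (f s) (g s a))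
    -- transition equivariance: τ̄_{g_s(a)}(·|f(s)) is the pushforward of τ_a(·|s) by f
    (hτeq : ∀ s a, Measure.map f (τ a s) = τb (g s a) (f s))
    -- the value-iteration sequence on M
    (Q : ℕ → S → A → ℝ)
    (hQ0 : ∀ s a, Q 0 s a = R s a)
    (hQ : ∀ m s a, Q (m + 1) s a = R s a + γ * ∫ s', (⨆ a', Q m s' a') ∂(τ a s))
    -- the value-iteration sequence on M̄
    (Qb : ℕ → Sb → Ab → ℝ)
    (hQb0 : ∀ sb ab, Qb 0 sb ab = Rb sb ab)
    (hQb : ∀ m sb ab, Qb (m + 1) sb ab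
        = Rb sb ab + γ * ∫ sb', (⨆ ab', Qb m sb' ab') ∂(τb ab sb))
    -- measurability of the iterated suprema
    (hQmeas : ∀ m, Measurable fun s' => ⨆ a', Q m s' a')
    (hQbmeas : ∀ m, Measurable fun sb' => ⨆ ab', Qb m sb' ab') :
    ∀ m s a, Q m s a = Qb m (f s) (g s a) := by
  intro m
  induction m with
  | zero => intro s a; rw [hQ0, hQb0, hR]
  | succ m ih =>
    intro s a
    rw [hQ, hQb, hR]
    congr 1
    congr 1
    have hpt : ∀ s', (⨆ a', Q m s' a') = ⨆ ab', Qb m (f s') ab' := by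
      intro s'
      have : (fun a' => Q m s' a') = fun a' => Qb m (f s') (g s' a') := by
        funext a'; exact ih s' a'
      rw [this]
      exact (hgsurj s').iSup_comp (fun ab' => Qb m (f s') ab')
    calc ∫ s', (⨆ a', Q m s' a') ∂(τ a s)
        = ∫ s', (⨆ ab', Qb m (f s') ab') ∂(τ a s) := by
          simp_rw [hpt]
      _ = ∫ sb', (⨆ ab', Qb m sb' ab') ∂(Measure.map f (τ a s)) :=
          (integral_map hfmeas.aemeasurable (hQbmeas m).aestronglyMeasurable).symm
      _ = ∫ sb', (⨆ ab', Qb m sb' ab') ∂(τb (g s a) (f s)) := by rw [hτeq]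
end

section
/- Let h = (f, g_s) be a continuous MDP homomorphism from M to M̄ with bounded rewards and γ ∈ (0,1). Then the optimal action-value functions (defined as the limits of the value-iteration sequences Q_m and Q̄_m, which converge uniformly) satisfy Q*(s,a) = Q̄*(f(s), g_s(a)) for all (s,a) ∈ S × A. -/
open MeasureTheory Filter Topology

/-- Optimal value equivalence for continuous MDP homomorphisms: the optimal action-value
functions, obtained as limits of the value-iteration sequences, satisfy
`Q*(s,a) = Q̄*(f(s), g_s(a))` for all `(s,a)`. -/
theorem stmt_12
    {S A Sb Ab : Type*}
    [MeasurableSpace S] [MeasurableSpace A] [MeasurableSpace Sb] [MeasurableSpace Ab]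
    -- the actual MDP M
    (τ : A → S → Measure S) (hτ : ∀ a s, IsProbabilityMeasure (τ a s))
    (R : S → A → ℝ) (hRmeas : Measurable fun p : S × A => R p.1 p.2)
    (hRbdd : ∃ C, ∀ s a, |R s a| ≤ C)
    -- the abstract MDP M̄
    (τb : Ab → Sb → Measure Sb) (hτb : ∀ ab sb, IsProbabilityMeasure (τb ab sb))
    (Rb : Sb → Ab → ℝ) (hRbmeas : Measurable fun p : Sb × Ab => Rb p.1 p.2)
    (γ : ℝ) (hγ0 : 0 < γ) (hγ1 : γ < 1)
    -- the continuous MDP homomorphism h = (f, g_s)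
    (f : S → Sb) (hfmeas : Measurable f) (hfsurj : Function.Surjective f)
    (g : S → A → Ab) (hgmeas : ∀ s, Measurable (g s))
    (hgsurj : ∀ s, Function.Surjective (g s))
    -- reward invariance
    (hR : ∀ s a, R s a = Rb (f s) (g s a))
    -- transition equivariance
    (hτeq : ∀ s a, Measure.map f (τ a s) = τb (g s a) (f s))
    -- the value-iteration sequence on M
    (Q : ℕ → S → A → ℝ)
    (hQ0 : ∀ s a, Q 0 s a = R s a)
    (hQ : ∀ m s a, Q (m + 1) s a = R s a + γ * ∫ s', (⨆ a', Q m s' a') ∂(τ a s))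
    -- the value-iteration sequence on M̄
    (Qb : ℕ → Sb → Ab → ℝ)
    (hQb0 : ∀ sb ab, Qb 0 sb ab = Rb sb ab)
    (hQb : ∀ m sb ab, Qb (m + 1) sb ab
        = Rb sb ab + γ * ∫ sb', (⨆ ab', Qb m sb' ab') ∂(τb ab sb))
    -- measurability of the iterated suprema
    (hQmeas : ∀ m, Measurable fun s' => ⨆ a', Q m s' a')
    (hQbmeas : ∀ m, Measurable fun sb' => ⨆ ab', Qb m sb' ab')
    -- the optimal value functions are the (uniform) limits of the iteration
    (Qstar : S → A → ℝ)
    (hQstar : TendstoUniformly (fun m => fun p : S × A => Q m p.1 p.2)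
        (fun p : S × A => Qstar p.1 p.2) atTop)
    (Qbstar : Sb → Ab → ℝ)
    (hQbstar : TendstoUniformly (fun m => fun p : Sb × Ab => Qb m p.1 p.2)
        (fun p : Sb × Ab => Qbstar p.1 p.2) atTop) :
    ∀ s a, Qstar s a = Qbstar (f s) (g s a) := by
  have key : ∀ m s a, Q m s a = Qb m (f s) (g s a) := by
    intro m
    induction m with
    | zero => intro s a; rw [hQ0, hQb0, hR]
    | succ m ih =>
      intro s a
      rw [hQ m s a, hQb m (f s) (g s a), hR]
      congr 1
      congr 1
      have h1 : ∀ s', (⨆ a', Q m s' a') = ⨆ ab', Qb m (f s') ab' := by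
        intro s'
        have : (⨆ a', Q m s' a') = ⨆ a', Qb m (f s') (g s' a') := by
          congr 1; ext a'; exact ih s' a'
        rw [this, (hgsurj s').iSup_comp]
      calc ∫ s', (⨆ a', Q m s' a') ∂(τ a s)
          = ∫ s', (⨆ ab', Qb m (f s') ab') ∂(τ a s) := by
            simp_rw [h1]
        _ = ∫ sb', (⨆ ab', Qb m sb' ab') ∂(Measure.map f (τ a s)) := by
            rw [MeasureTheory.integral_map hfmeas.aemeasurable
              (hQbmeas m).aestronglyMeasurable]
        _ = ∫ sb', (⨆ ab', Qb m sb' ab') ∂(τb (g s a) (f s)) := by rw [hτeq]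
  intro s a
  have h1 : Tendsto (fun m => Q m s a) atTop (nhds (Qstar s a)) :=
    hQstar.tendsto_at (s, a)
  have h2 : Tendsto (fun m => Qb m (f s) (g s a)) atTop (nhds (Qbstar (f s) (g s a))) :=
    hQbstar.tendsto_at (f s, g s a)
  have : (fun m => Q m s a) = fun m => Qb m (f s) (g s a) := by
    ext m; exact key m s a
  rw [this] at h1
  exact tendsto_nhds_unique h1 h2
end

section
/- Let g_s: A → Ā be a local diffeomorphism between smooth manifolds of equal dimension, π↑: S → A a deterministic policy differentiable in parameters θ, and π̄: S̄ → Ā the abstract policy satisfying g_s(π↑_θ(s)) = π̄_θ(f(s)) for all s. Suppose Q^{π↑}(s,a) = Q̄^{π̄}(f(s), g_s(a)) with both Q functions differentiable in the action argument. Then for every s: ∇_a Q^{π↑}(s,a)|_{a=π↑_θ(s)} · ∇_θ π↑_θ(s) = ∇_{ā} Q̄^{π̄}(f(s), ā)|_{ā=π̄_θ(f(s))} · ∇_θ π̄_θ(f(s)). -/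
/-- Equivalence of deterministic policy gradients: if `g_s` is a local diffeomorphism
(its derivative at `π↑_θ(s)` is a linear isomorphism `P`), the policies satisfy the
lifting relation `g_s(π↑_θ(s)) = π̄_θ(f(s))`, and value equivalence
`Q(s,a) = Q̄(f(s), g_s(a))` holds, then
`∇_a Q(s,a)|_{a=π↑_θ(s)} ∘ ∇_θ π↑_θ(s) = ∇_ā Q̄(f(s),ā)|_{ā=π̄_θ(f(s))} ∘ ∇_θ π̄_θ(f(s))`. -/
theorem stmt_14
    {Θ A Ab S Sb : Type*}
    [NormedAddCommGroup Θ] [NormedSpace ℝ Θ]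
    [NormedAddCommGroup A] [NormedSpace ℝ A]
    [NormedAddCommGroup Ab] [NormedSpace ℝ Ab]
    (f : S → Sb) (g : S → A → Ab)
    (πl : Θ → S → A) (πb : Θ → Sb → Ab)
    (Q : S → A → ℝ) (Qb : Sb → Ab → ℝ)
    -- policy lifting relation g_s(π↑_θ(s)) = π̄_θ(f(s))
    (hcomm : ∀ θ s, g s (πl θ s) = πb θ (f s))
    -- value equivalence
    (hval : ∀ s a, Q s a = Qb (f s) (g s a))
    (θ : Θ) (s : S)
    -- ∇_θ π↑_θ(s)
    (Dπ : Θ →L[ℝ] A) (hDπ : HasFDerivAt (fun θ' => πl θ' s) Dπ θ)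
    -- ∇_θ π̄_θ(f(s))
    (Dπb : Θ →L[ℝ] Ab) (hDπb : HasFDerivAt (fun θ' => πb θ' (f s)) Dπb θ)
    -- g_s is a local diffeomorphism: its differential at π↑_θ(s) is a linear isomorphism
    (P : A ≃L[ℝ] Ab) (hP : HasFDerivAt (g s) (P : A →L[ℝ] Ab) (πl θ s))
    -- ∇_a Q(s,a)|_{a = π↑_θ(s)}
    (DQ : A →L[ℝ] ℝ) (hDQ : HasFDerivAt (fun a => Q s a) DQ (πl θ s))
    -- ∇_ā Q̄(f(s),ā)|_{ā = π̄_θ(f(s))}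
    (DQb : Ab →L[ℝ] ℝ) (hDQb : HasFDerivAt (fun ab => Qb (f s) ab) DQb (πb θ (f s))) :
    DQ.comp Dπ = DQb.comp Dπb := by
  have hDQb' : HasFDerivAt (fun ab => Qb (f s) ab) DQb (g s (πl θ s)) := by
    rw [hcomm θ s]; exact hDQb
  have h1 : HasFDerivAt (fun a => Q s a) (DQb.comp (P : A →L[ℝ] Ab)) (πl θ s) := by
    have heq : (fun a => Q s a) = (fun ab => Qb (f s) ab) ∘ g s :=
      funext fun a => hval s a
    rw [heq]; exact hDQb'.comp (πl θ s) hP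
  have hDQeq : DQ = DQb.comp (P : A →L[ℝ] Ab) := hDQ.unique h1
  have h2 : HasFDerivAt (fun θ' => πb θ' (f s))
      ((P : A →L[ℝ] Ab).comp Dπ) θ := by
    have heq : (fun θ' => πb θ' (f s)) = g s ∘ fun θ' => πl θ' s :=
      funext fun θ' => (hcomm θ' s).symm
    rw [heq]; exact hP.comp θ hDπ
  have hDπeq : Dπb = (P : A →L[ℝ] Ab).comp Dπ := hDπb.unique h2
  rw [hDQeq, hDπeq, ContinuousLinearMap.comp_assoc]
end
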